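/- Let n, k be positive integers with k ≤ 2n and let a : Fin k → ℝ with a(i) > 0 for all i. Then there exist vectors v(1), …, v(k) in ℝ^n with ‖v(i)‖_1 = 1 for every i, such that for all i ≠ j and all real numbers s, t ≥ 0 one has d_1(t·v(i), s·v(j)) = t + s. Consequently the metric star tree with k leaves at distances a(1), …, a(k) from the center embeds isometrically into (ℝ^n, d_1) via (i, t) ↦ t·v(i). -/

import Mathlib

lemma l1_dist_single (n : ℕ) (m0 : Fin n) (c : ℝ) :
    ∀ x y : PiLp 1 (fun _ : Fin n => ℝ),
      (∀ m, m ≠ m0 → x m = y m) → x m0 - y m0 = c → dist x y = |c| := by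
  intro x y h he
  have hp : (0:ℝ) < (1 : ENNReal).toReal := by norm_num
  rw [PiLp.dist_eq_sum hp]
  simp only [ENNReal.toReal_one, Real.rpow_one]
  rw [Finset.sum_eq_single m0]
  · simp [Real.dist_eq, he]
  · intro b _ hb
    simp [Real.dist_eq, h b hb]
  · simp

/-- A metric star tree with `k ≤ 2n` leaves embeds isometrically into `(ℝ^n, d_1)`:
there are unit vectors `v i` (ℓ¹ norm) such that `(i, t) ↦ t • v i` is an isometric
embedding of the star tree with arm lengths `a i`. -/
theorem star_tree_embeds_into_l1 (n k : ℕ) (hn : 0 < n) (hk : 0 < k)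
    (hkn : k ≤ 2 * n) (a : Fin k → ℝ) (ha : ∀ i, 0 < a i) :
    ∃ v : Fin k → PiLp 1 (fun _ : Fin n => ℝ),
      (∀ i, ‖v i‖ = 1) ∧
      (∀ i j : Fin k, i ≠ j → ∀ s t : ℝ, 0 ≤ s → 0 ≤ t →
        dist (t • v i) (s • v j) = t + s) ∧
      (∀ i : Fin k, ∀ s t : ℝ, dist (t • v i) (s • v i) = |t - s|) := by
  set f : Fin k → Fin n := fun i => ⟨i.val / 2, by omega⟩ with hf
  set ε : Fin k → ℝ := fun i => if i.val % 2 = 0 then 1 else -1 with hε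
  have hεabs : ∀ i, |ε i| = 1 := by
    intro i; simp only [hε]; split <;> simp
  set v : Fin k → PiLp 1 (fun _ : Fin n => ℝ) :=
    fun i => WithLp.toLp 1 (fun m => if m = f i then ε i else 0) with hv
  have hvm : ∀ i m, v i m = if m = f i then ε i else 0 := fun i m => rfl
  refine ⟨v, ?_, ?_, ?_⟩
  · intro i
    have := l1_dist_single n (f i) (ε i) (v i) 0
      (by intro m hm; simp [hvm, hm]) (by simp [hvm])
    simpa [hεabs i] using this
  · intro i j hij s t hs ht
    by_cases hfij : f i = f j
    · -- same coordinate, opposite signs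
      have hij2 : i.val / 2 = j.val / 2 := by
        have := congrArg Fin.val hfij; simpa [hf] using this
      have hne : i.val ≠ j.val := fun h => hij (Fin.ext h)
      have hsign : ε i = -ε j := by
        simp only [hε]
        have : i.val % 2 = 0 ∧ j.val % 2 = 1 ∨ i.val % 2 = 1 ∧ j.val % 2 = 0 := by omega
        rcases this with ⟨h1, h2⟩ | ⟨h1, h2⟩ <;> simp [h1, h2]
      have := l1_dist_single n (f i) (ε i * (t + s)) (t • v i) (s • v j)
        (by intro m hm; simp [hvm, hm, hfij ▸ hm])
        (by simp [hvm, hfij, hsign]; ring)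
      rw [this, abs_mul, hεabs i, one_mul, abs_of_nonneg (by linarith)]
    · -- different coordinates
      have hp : (0:ℝ) < (1 : ENNReal).toReal := by norm_num
      rw [PiLp.dist_eq_sum hp]
      simp only [ENNReal.toReal_one, Real.rpow_one]
      have key : ∀ m : Fin n, dist ((t • v i) m) ((s • v j) m) =
          (if m = f i then t else 0) + (if m = f j then s else 0) := by
        intro m
        by_cases h1 : m = f i
        · have h2 : m ≠ f j := by rw [h1]; exact fun h => hfij h
          simp [h1, h2, hvm, hfij, Real.dist_eq, abs_mul, hεabs i, abs_of_nonneg ht]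
        · by_cases h2 : m = f j
          · simp [h1, h2, hvm, Ne.symm hfij, Real.dist_eq, abs_mul, hεabs j, abs_of_nonneg hs]
          · simp [h1, h2, hvm, Real.dist_eq]
      rw [Finset.sum_congr rfl fun m _ => key m, Finset.sum_add_distrib]
      simp
  · intro i s t
    have := l1_dist_single n (f i) ((t - s) * ε i) (t • v i) (s • v i)
      (by intro m hm; simp [hvm, hm])
      (by simp [hvm]; ring)
    rw [this, abs_mul, hεabs i, mul_one]
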